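/- The comprehensive similarity s^h(a,b) defined as a ratio with numerator ∑_j k_j s_j + ∑ z(s_j,s_ℓ) k_{jℓ} + ∑ z(s_j,|d_p|) k_{jp} and denominator K^h(a,b) = ∑_j k_j + ∑ z(s_j,s_ℓ) k_{jℓ} + ∑ z(s_j,|d_p|) k_{jp}, with z(x,y) = x·y, lies in [0,1], provided s_j ∈ [0,1] for all j, K^h(a,b) > 0, and the non-negativity condition k_j - ∑_{negative k_{jℓ}} |k_{jℓ}| - ∑ |k_{jp}| ≥ 0 holds for every j. -/

import Mathlib

open Classical in
theorem stmt_17 (n : ℕ) (k : Fin n → ℝ) (hk : ∀ j, 0 < k j)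
    (M O : Finset (Fin n × Fin n)) (kM kO : Fin n × Fin n → ℝ)
    (hO : ∀ p ∈ O, kO p < 0)
    (s : Fin n → ℝ) (hs : ∀ j, 0 ≤ s j ∧ s j ≤ 1)
    (d : Fin n → ℝ) (hd : ∀ j, -1 ≤ d j ∧ d j ≤ 0)
    (hnonneg : ∀ j : Fin n,
      k j - (∑ p ∈ M, if (p.1 = j ∨ p.2 = j) ∧ kM p < 0 then |kM p| else 0)
          - (∑ p ∈ O, if p.1 = j then |kO p| else 0) ≥ 0)
    (N K : ℝ)
    (hN : N = (∑ j, k j * s j) + (∑ p ∈ M, s p.1 * s p.2 * kM p)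
        + (∑ p ∈ O, s p.1 * |d p.2| * kO p))
    (hKdef : K = (∑ j, k j) + (∑ p ∈ M, s p.1 * s p.2 * kM p)
        + (∑ p ∈ O, s p.1 * |d p.2| * kO p))
    (hKpos : 0 < K) :
    0 ≤ N / K ∧ N / K ≤ 1 := by
  have hNK : N ≤ K := by
    rw [hN, hKdef]
    have : (∑ j, k j * s j) ≤ ∑ j, k j := by
      apply Finset.sum_le_sum
      intro j _
      nlinarith [(hs j).1, (hs j).2, (hk j).le]
    linarith
  -- lower bounds for interaction terms
  have hMb : ∀ p ∈ M, -(if kM p < 0 then s p.1 * |kM p| else 0) ≤ s p.1 * s p.2 * kM p := by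
    intro p _
    by_cases h : kM p < 0
    · rw [if_pos h, abs_of_neg h]
      have h1 : s p.1 * s p.2 ≤ s p.1 := mul_le_of_le_one_right (hs p.1).1 (hs p.2).2
      nlinarith [mul_nonneg (sub_nonneg.2 h1) (neg_nonneg.2 h.le)]
    · rw [if_neg h]
      push_neg at h
      have := mul_nonneg (mul_nonneg (hs p.1).1 (hs p.2).1) h
      linarith
  have hOb : ∀ p ∈ O, -(s p.1 * |kO p|) ≤ s p.1 * |d p.2| * kO p := by
    intro p hp
    have h := hO p hp
    rw [abs_of_neg h]
    have hd1 : |d p.2| ≤ 1 := by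
      rw [abs_of_nonpos (hd p.2).2]; linarith [(hd p.2).1]
    have hd0 : 0 ≤ |d p.2| := abs_nonneg _
    have h1 : s p.1 * |d p.2| ≤ s p.1 := mul_le_of_le_one_right (hs p.1).1 hd1
    nlinarith [mul_nonneg (sub_nonneg.2 h1) (neg_nonneg.2 h.le)]
  -- swap lemmas
  have hswapM : (∑ p ∈ M, (if kM p < 0 then s p.1 * |kM p| else 0))
      = ∑ j, s j * (∑ p ∈ M, if p.1 = j ∧ kM p < 0 then |kM p| else 0) := by
    simp_rw [Finset.mul_sum]
    rw [Finset.sum_comm]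
    apply Finset.sum_congr rfl
    intro p _
    by_cases h : kM p < 0
    · simp [h]
    · simp [h]
  have hswapO : (∑ p ∈ O, s p.1 * |kO p|)
      = ∑ j, s j * (∑ p ∈ O, if p.1 = j then |kO p| else 0) := by
    simp_rw [Finset.mul_sum]
    rw [Finset.sum_comm]
    apply Finset.sum_congr rfl
    intro p _
    simp
  have hNnn : 0 ≤ N := by
    rw [hN]
    have h1 : -(∑ p ∈ M, (if kM p < 0 then s p.1 * |kM p| else 0))
        ≤ ∑ p ∈ M, s p.1 * s p.2 * kM p := by
      rw [← Finset.sum_neg_distrib]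
      exact Finset.sum_le_sum hMb
    have h2 : -(∑ p ∈ O, s p.1 * |kO p|) ≤ ∑ p ∈ O, s p.1 * |d p.2| * kO p := by
      rw [← Finset.sum_neg_distrib]
      exact Finset.sum_le_sum hOb
    have h3 : 0 ≤ (∑ j, k j * s j)
        - (∑ p ∈ M, (if kM p < 0 then s p.1 * |kM p| else 0))
        - (∑ p ∈ O, s p.1 * |kO p|) := by
      rw [hswapM, hswapO]
      rw [← Finset.sum_sub_distrib, ← Finset.sum_sub_distrib]
      apply Finset.sum_nonneg
      intro j _
      have hA : (∑ p ∈ M, if p.1 = j ∧ kM p < 0 then |kM p| else 0)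
          ≤ ∑ p ∈ M, if (p.1 = j ∨ p.2 = j) ∧ kM p < 0 then |kM p| else 0 := by
        apply Finset.sum_le_sum
        intro p _
        by_cases h : p.1 = j ∧ kM p < 0
        · rw [if_pos h, if_pos ⟨Or.inl h.1, h.2⟩]
        · rw [if_neg h]
          positivity
      have := hnonneg j
      have hsj := hs j
      nlinarith [Finset.sum_nonneg (s := O) (f := fun p => if p.1 = j then |kO p| else 0)
        (fun p _ => by positivity)]
    linarith
  constructor
  · exact div_nonneg hNnn hKpos.le
  · rw [div_le_one hKpos]; exact hNK
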